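/- There exists an element α ∈ O_∞ that is not (−1)-approximable: no sequence of (−1)-approximations of α converges to α. In particular the bound −2 of the previous statement is optimal. (Sharpness assertion of Example 8.3 of the paper for the projective line with a degree-2 point at infinity.) -/

import Mathlib

open Filter Polynomial MeasureTheory IsDedekindDomain
open scoped Multiplicative

local notation "ℤₘ₀" => WithZero (Multiplicative ℤ)

/-- The real absolute value attached to a `ℤₘ₀`-valued valuation with base `q`:
`Multiplicative.ofAdd n ↦ q ^ n` and `0 ↦ 0`. -/
noncomputable def zabs (q : ℕ) (x : WithZero (Multiplicative ℤ)) : ℝ :=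
  if hx : x = 0 then 0 else (q : ℝ) ^ Multiplicative.toAdd (WithZero.unzero hx)

variable (Fq : Type) [Field Fq] [Fintype Fq]

/-- The height-one prime `(π)` of `F_q[x]` attached to an irreducible polynomial `π`. -/
noncomputable def piPrime (π : Polynomial Fq) (hirr : Irreducible π) :
    HeightOneSpectrum (Polynomial Fq) where
  asIdeal := Ideal.span {π}
  isPrime := (Ideal.span_singleton_prime hirr.ne_zero).mpr hirr.prime
  ne_bot := by
    simp only [ne_eq, Ideal.span_singleton_eq_bot]
    exact hirr.ne_zero

/-- The completion `K_∞` of `K = F_q(x)` with respect to the `π`-adic valuation `ν`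
(normalized by `ν π = 1`). -/
noncomputable abbrev Kinf (π : Polynomial Fq) (hirr : Irreducible π) : Type :=
  (piPrime Fq π hirr).adicCompletion (RatFunc Fq)

/-- The absolute value `|h| = q ^ (-ν h)` on `K_∞`. -/
noncomputable def absKinf (q : ℕ) (π : Polynomial Fq) (hirr : Irreducible π)
    (h : Kinf Fq π hirr) : ℝ :=
  zabs q (Valued.v h)

/-- The inclusion `K = F_q(x) → K_∞`. -/
noncomputable def toKinf (π : Polynomial Fq) (hirr : Irreducible π) (r : RatFunc Fq) :
    Kinf Fq π hirr := r

/-- The ring `A` of rational functions regular away from the closed point defined by `π`: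
the `F_q`-subalgebra of `F_q(x)` generated by `1/π`, `x/π` and `x²/π`. -/
noncomputable def ringA (π : Polynomial Fq) : Subalgebra Fq (RatFunc Fq) :=
  Algebra.adjoin Fq
    {(algebraMap (Polynomial Fq) (RatFunc Fq) π)⁻¹,
      algebraMap (Polynomial Fq) (RatFunc Fq) X / algebraMap (Polynomial Fq) (RatFunc Fq) π,
      algebraMap (Polynomial Fq) (RatFunc Fq) (X ^ 2) / algebraMap (Polynomial Fq) (RatFunc Fq) π}

/-- `f/g` is an `M`-approximation of `α ∈ K_∞`: `f, g ∈ A`, `g ≠ 0`, `fA + gA = A` and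
`|α - f/g| < q^(-M)/|g|²`. -/
def IsApproxA (q : ℕ) (π : Polynomial Fq) (hirr : Irreducible π) (M : ℤ)
    (α : Kinf Fq π hirr) (f g : ringA Fq π) : Prop :=
  g ≠ 0 ∧ Ideal.span {f, g} = (⊤ : Ideal (ringA Fq π)) ∧
    absKinf Fq q π hirr
        (α - toKinf Fq π hirr (f : RatFunc Fq) / toKinf Fq π hirr (g : RatFunc Fq)) <
      (q : ℝ) ^ (-M) / absKinf Fq q π hirr (toKinf Fq π hirr (g : RatFunc Fq)) ^ 2

lemma mem_ringA_rep {π : Polynomial Fq} (hπ : π ≠ 0) (hdeg : π.natDegree = 2)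
    {h : RatFunc Fq} (hh : h ∈ ringA Fq π) :
    ∃ (H : Polynomial Fq) (m : ℕ), H.natDegree ≤ 2 * m ∧
      h = algebraMap (Polynomial Fq) (RatFunc Fq) H /
        algebraMap (Polynomial Fq) (RatFunc Fq) (π ^ m) := by
  have hπK : ∀ m : ℕ, algebraMap (Polynomial Fq) (RatFunc Fq) (π ^ m) ≠ 0 := fun m => by
    simp [RatFunc.algebraMap_ne_zero, pow_ne_zero, hπ]
  induction hh using Algebra.adjoin_induction with
  | mem x hx =>
    rcases hx with hx | hx | hx
    · exact ⟨1, 1, by simp, by rw [hx]; rw [inv_eq_one_div]; simp⟩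
    · exact ⟨X, 1, by simp [hdeg], by rw [hx]; simp⟩
    · exact ⟨X ^ 2, 1, by simp [natDegree_pow, hdeg], by rw [hx]; simp⟩
  | algebraMap r =>
    refine ⟨C r, 0, by simp, ?_⟩
    simp [RatFunc.algebraMap_C]
  | add x y hx hy ihx ihy =>
    obtain ⟨H1, m1, hd1, rfl⟩ := ihx
    obtain ⟨H2, m2, hd2, rfl⟩ := ihy
    refine ⟨H1 * π ^ m2 + H2 * π ^ m1, m1 + m2, ?_, ?_⟩
    · refine le_trans (natDegree_add_le _ _) ?_
      have b1 : (H1 * π ^ m2).natDegree ≤ H1.natDegree + (π ^ m2).natDegree :=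
        natDegree_mul_le
      have b2 : (H2 * π ^ m1).natDegree ≤ H2.natDegree + (π ^ m1).natDegree :=
        natDegree_mul_le
      have p1 : (π ^ m2).natDegree ≤ 2 * m2 := by
        rw [← hdeg]; exact (natDegree_pow_le).trans (by rw [mul_comm])
      have p2 : (π ^ m1).natDegree ≤ 2 * m1 := by
        rw [← hdeg]; exact (natDegree_pow_le).trans (by rw [mul_comm])
      omega
    · rw [div_add_div _ _ (hπK m1) (hπK m2)]
      rw [← map_mul, ← map_mul, ← map_mul, ← map_add, ← pow_add]
      ring_nf
  | mul x y hx hy ihx ihy =>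
    obtain ⟨H1, m1, hd1, rfl⟩ := ihx
    obtain ⟨H2, m2, hd2, rfl⟩ := ihy
    refine ⟨H1 * H2, m1 + m2, ?_, ?_⟩
    · have := natDegree_mul_le (p := H1) (q := H2); omega
    · rw [div_mul_div_comm, ← map_mul, ← map_mul, ← pow_add]

lemma vP_pi_pow {π : Polynomial Fq} (hirr : Irreducible π) (j : ℕ) :
    (piPrime Fq π hirr).intValuation (π ^ j)
      = (Multiplicative.ofAdd (-(j : ℤ)) : Multiplicative ℤ) := by
  have h1 : (piPrime Fq π hirr).intValuation π = Multiplicative.ofAdd (-1 : ℤ) :=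
    (piPrime Fq π hirr).intValuation_singleton hirr.ne_zero rfl
  rw [map_pow, h1, ← WithZero.coe_pow, WithZero.coe_inj, ← ofAdd_nsmul]
  simp

lemma vP_not_dvd {π : Polynomial Fq} (hirr : Irreducible π) {P : Polynomial Fq} (hP : ¬ π ∣ P) :
    (piPrime Fq π hirr).intValuation P = 1 := by
  have h1 : (piPrime Fq π hirr).intValuation P ≤ 1 := (piPrime Fq π hirr).intValuation_le_one P
  rcases lt_or_eq_of_le h1 with h | h
  · exfalso
    rw [(piPrime Fq π hirr).intValuation_lt_one_iff_dvd] at h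
    rw [Ideal.dvd_span_singleton] at h
    exact hP ((Ideal.mem_span_singleton).mp h)
  · exact h

lemma vP_le_iff_dvd {π : Polynomial Fq} (hirr : Irreducible π) (N : Polynomial Fq) (t : ℕ) :
    (piPrime Fq π hirr).intValuation N ≤ (Multiplicative.ofAdd (-(t : ℤ)) : Multiplicative ℤ)
      ↔ π ^ t ∣ N := by
  rw [show ((Multiplicative.ofAdd (-(t : ℤ)) : Multiplicative ℤ) : ℤₘ₀) = WithZero.exp (-(t : ℤ)) from rfl,
    (piPrime Fq π hirr).intValuation_le_pow_iff_dvd N t]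
  show Ideal.span {π} ^ t ∣ _ ↔ _
  rw [Ideal.span_singleton_pow, Ideal.dvd_span_singleton, Ideal.mem_span_singleton]

lemma vv_div {π : Polynomial Fq} (hirr : Irreducible π) (P Q : Polynomial Fq) :
    (piPrime Fq π hirr).valuation (K := RatFunc Fq)
      (algebraMap (Polynomial Fq) (RatFunc Fq) P / algebraMap (Polynomial Fq) (RatFunc Fq) Q)
      = (piPrime Fq π hirr).intValuation P / (piPrime Fq π hirr).intValuation Q := by
  rw [map_div₀, IsDedekindDomain.HeightOneSpectrum.valuation_of_algebraMap,
    IsDedekindDomain.HeightOneSpectrum.valuation_of_algebraMap]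


lemma zm0_mul_le_one {x : ℤₘ₀} {s : ℤ}
    (h : x * ((Multiplicative.ofAdd s : Multiplicative ℤ) : ℤₘ₀) ≤ 1) :
    x ≤ ((Multiplicative.ofAdd (-s) : Multiplicative ℤ) : ℤₘ₀) := by
  rcases eq_or_ne x 0 with rfl | hx
  · exact zero_le'
  · obtain ⟨y, rfl⟩ := WithZero.ne_zero_iff_exists.mp hx
    rw [← WithZero.coe_mul, ← WithZero.coe_one, WithZero.coe_le_coe] at h
    rw [WithZero.coe_le_coe]
    have h2 : Multiplicative.toAdd (y * Multiplicative.ofAdd s) ≤ Multiplicative.toAdd (1 : Multiplicative ℤ) := h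
    simp only [toAdd_mul, toAdd_ofAdd, toAdd_one] at h2
    have h3 : Multiplicative.toAdd y ≤ -s := by omega
    exact h3

/-- The key lemma: if `f, g ∈ A`, `g ≠ 0`, `f` and `g` generate the unit ideal, and
`v(Xg - f) * v(g) ≤ 1`, then `v(Xg - f) = v(g)`. -/
lemma key_lemma {π : Polynomial Fq} (hmonic : π.Monic) (hirr : Irreducible π)
    (hdeg : π.natDegree = 2) (f g : ringA Fq π) (hg : (g : RatFunc Fq) ≠ 0)
    (hco : ∃ u w : ringA Fq π, u * f + w * g = 1)
    (Hle : (piPrime Fq π hirr).valuation (K := RatFunc Fq) (algebraMap Fq[X] (RatFunc Fq) X * g - f)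
        * (piPrime Fq π hirr).valuation (K := RatFunc Fq) (g : RatFunc Fq) ≤ 1) :
    (piPrime Fq π hirr).valuation (K := RatFunc Fq) (algebraMap Fq[X] (RatFunc Fq) X * g - f)
      = (piPrime Fq π hirr).valuation (K := RatFunc Fq) (g : RatFunc Fq) := by
  have hπ : π ≠ 0 := hirr.ne_zero
  have hπK : ∀ j : ℕ, algebraMap Fq[X] (RatFunc Fq) (π ^ j) ≠ 0 := fun j => by
    simp [RatFunc.algebraMap_ne_zero, pow_ne_zero, hπ]
  obtain ⟨F, p, hdF, hf⟩ := mem_ringA_rep Fq hπ hdeg f.2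
  obtain ⟨G0, m, hdG0, hg0⟩ := mem_ringA_rep Fq hπ hdeg g.2
  have hG0 : G0 ≠ 0 := by
    intro h; apply hg; rw [hg0, h]; simp
  obtain ⟨k, G, hGndvd, hG0eq⟩ := WfDvdMonoid.max_power_factor hG0 hirr
  have hGne : G ≠ 0 := by rintro rfl; simp at hG0eq; exact hG0 hG0eq
  have hdG0' : G0.natDegree = 2 * k + G.natDegree := by
    rw [hG0eq, natDegree_mul (pow_ne_zero _ hπ) hGne, hmonic.natDegree_pow, hdeg]; ring
  have hkm : k ≤ m := by omega
  -- the valuation of g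
  have hvg : (piPrime Fq π hirr).valuation (K := RatFunc Fq) (g : RatFunc Fq)
      = ((Multiplicative.ofAdd ((m : ℤ) - k) : Multiplicative ℤ) : ℤₘ₀) := by
    rw [hg0, vv_div Fq hirr, hG0eq, map_mul, vP_pi_pow Fq hirr, vP_pi_pow Fq hirr,
      vP_not_dvd Fq hirr hGndvd, mul_one, ← WithZero.coe_div, WithZero.coe_inj,
      ← ofAdd_sub]
    congr 1; ring
  -- the numerator
  set N : Polynomial Fq := X * G0 * π ^ p - F * π ^ m with hN_def
  have he : algebraMap Fq[X] (RatFunc Fq) X * (g : RatFunc Fq) - (f : RatFunc Fq) = algebraMap Fq[X] (RatFunc Fq) N / algebraMap Fq[X] (RatFunc Fq) (π ^ (m + p)) := by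
    have hπ0 : algebraMap Fq[X] (RatFunc Fq) π ≠ 0 := by simpa using hπK 1
    rw [hf, hg0, hN_def]
    push_cast [map_sub, map_mul, map_pow]
    field_simp [hπ0]
    ring
  by_cases hN : N = 0
  · -- exact case: f = X g, contradiction with coprimality
    exfalso
    have hfXg : (f : RatFunc Fq) = algebraMap Fq[X] (RatFunc Fq) X * (g : RatFunc Fq) := by
      have h0 : algebraMap Fq[X] (RatFunc Fq) X * (g : RatFunc Fq) - (f : RatFunc Fq) = 0 := by
        rw [he, hN]; simp
      linear_combination -h0
    obtain ⟨u, w, huw⟩ := hco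
    have hcoe : (u : RatFunc Fq) * (f : RatFunc Fq) + (w : RatFunc Fq) * (g : RatFunc Fq) = 1 := by
      have := congrArg (Subtype.val) huw
      push_cast at this
      exact this
    obtain ⟨U, c, hdU, hu⟩ := mem_ringA_rep Fq hπ hdeg u.2
    obtain ⟨W, d, hdW, hw⟩ := mem_ringA_rep Fq hπ hdeg w.2
    -- polynomial identity from coprimality
    have hE : algebraMap Fq[X] (RatFunc Fq) ((X * U * π ^ d + W * π ^ c) * G0)
        = algebraMap Fq[X] (RatFunc Fq) (π ^ (c + d + m)) := by
      have hπ0 : algebraMap Fq[X] (RatFunc Fq) π ≠ 0 := by simpa using hπK 1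
      have h1 : algebraMap Fq[X] (RatFunc Fq) ((X * U * π ^ d + W * π ^ c) * G0)
          / algebraMap Fq[X] (RatFunc Fq) (π ^ (c + d + m))
          = (u : RatFunc Fq) * (f : RatFunc Fq) + (w : RatFunc Fq) * (g : RatFunc Fq) := by
        rw [hfXg, hu, hw, hg0]
        push_cast [map_mul, map_add, map_pow]
        field_simp [hπ0]
        ring
      rw [hcoe] at h1
      exact (div_eq_one_iff_eq (hπK _)).mp h1
    have hEpoly : (X * U * π ^ d + W * π ^ c) * G0 = π ^ (c + d + m) :=
      RatFunc.algebraMap_injective Fq hE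
    -- G is a unit
    have hGdvdG0 : G ∣ G0 := ⟨π ^ k, by rw [hG0eq]; ring⟩
    have hG0dvd : G0 ∣ π ^ (c + d + m) := ⟨X * U * π ^ d + W * π ^ c, by rw [← hEpoly]; ring⟩
    have hGdvd : G ∣ π ^ (c + d + m) := hGdvdG0.trans hG0dvd
    have hcop : IsCoprime (π ^ (c + d + m)) G :=
      ((hirr.coprime_iff_not_dvd).mpr hGndvd).pow_left
    have hGunit : IsUnit G := hcop.symm.isUnit_of_dvd hGdvd
    have hGdeg0 : G.natDegree = 0 := natDegree_eq_zero_of_isUnit hGunit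
    -- degree count in hEpoly
    have hW'ne : (X * U * π ^ d + W * π ^ c) ≠ 0 := by
      intro h0
      apply pow_ne_zero (c + d + m) hπ
      rw [← hEpoly, h0, zero_mul]
    have hdegE : (X * U * π ^ d + W * π ^ c).natDegree + G0.natDegree = 2 * (c + d + m) := by
      rw [← natDegree_mul hW'ne hG0, hEpoly, hmonic.natDegree_pow, hdeg]; ring
    have hW'deg : (X * U * π ^ d + W * π ^ c).natDegree ≤ 2 * c + 2 * d + 1 := by
      refine (natDegree_add_le _ _).trans ?_
      have b1 : (X * U * π ^ d).natDegree ≤ 1 + U.natDegree + (π ^ d).natDegree := by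
        refine (natDegree_mul_le).trans ?_
        have := natDegree_mul_le (p := (X : Fq[X])) (q := U)
        have := natDegree_X_le (R := Fq)
        omega
      have b2 : (W * π ^ c).natDegree ≤ W.natDegree + (π ^ c).natDegree := natDegree_mul_le
      have p1 : (π ^ d).natDegree = 2 * d := by rw [hmonic.natDegree_pow, hdeg]; ring
      have p2 : (π ^ c).natDegree = 2 * c := by rw [hmonic.natDegree_pow, hdeg]; ring
      omega
    -- degree count in N = 0 : X * G0 * π^p = F * π^m
    have hFne : F ≠ 0 := by
      intro h0
      rw [hN_def, h0, zero_mul, sub_zero] at hN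
      rcases mul_eq_zero.mp hN with h | h
      · rcases mul_eq_zero.mp h with h' | h'
        · exact X_ne_zero h'
        · exact hG0 h'
      · exact pow_ne_zero _ hπ h
    have hNzero : X * G0 * π ^ p = F * π ^ m := by
      have h2 := hN
      rw [hN_def] at h2
      exact sub_eq_zero.mp h2
    have hdegN : 1 + G0.natDegree + 2 * p = F.natDegree + 2 * m := by
      have e1 : (X * G0 * π ^ p).natDegree = 1 + G0.natDegree + 2 * p := by
        rw [natDegree_mul (mul_ne_zero X_ne_zero hG0) (pow_ne_zero _ hπ),
          natDegree_mul X_ne_zero hG0, hmonic.natDegree_pow, hdeg, natDegree_X]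
        ring
      have e2 : (F * π ^ m).natDegree = F.natDegree + 2 * m := by
        rw [natDegree_mul hFne (pow_ne_zero _ hπ), hmonic.natDegree_pow, hdeg]; ring
      rw [← e1, ← e2, hNzero]
    omega
  · -- main case: N ≠ 0
    -- the valuation of e
    have hve : (piPrime Fq π hirr).valuation (K := RatFunc Fq)
        (algebraMap Fq[X] (RatFunc Fq) X * (g : RatFunc Fq) - (f : RatFunc Fq))
        = (piPrime Fq π hirr).intValuation N
          * ((Multiplicative.ofAdd ((m : ℤ) + p) : Multiplicative ℤ) : ℤₘ₀) := by
      rw [he, vv_div Fq hirr, vP_pi_pow Fq hirr, div_eq_mul_inv, ← WithZero.coe_inv, ← ofAdd_neg,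
        neg_neg]
      push_cast
      ring_nf
    rw [hve, hvg] at Hle
    -- extract divisibility
    set t : ℕ := 2 * m + p - k with ht_def
    have hts : (t : ℤ) = ((m : ℤ) + p) + ((m : ℤ) - k) := by push_cast; omega
    have hNle : (piPrime Fq π hirr).intValuation N
        ≤ ((Multiplicative.ofAdd (-(t : ℤ)) : Multiplicative ℤ) : ℤₘ₀) := by
      rw [hts]
      apply zm0_mul_le_one
      rw [ofAdd_add, WithZero.coe_mul, ← mul_assoc]
      exact Hle
    have hdvdN : π ^ t ∣ N := (vP_le_iff_dvd Fq hirr N t).mp hNle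
    -- degree bounds
    have hdegNlow : 2 * t ≤ N.natDegree := by
      have := natDegree_le_of_dvd hdvdN hN
      rw [hmonic.natDegree_pow, hdeg] at this
      omega
    have hdegNup : N.natDegree ≤ 2 * m + 2 * p + 1 := by
      rw [hN_def]
      refine (natDegree_sub_le _ _).trans ?_
      have b1 : (X * G0 * π ^ p).natDegree ≤ 1 + 2 * m + 2 * p := by
        refine (natDegree_mul_le).trans ?_
        have b1' : (X * G0).natDegree ≤ 1 + 2 * m := by
          refine (natDegree_mul_le).trans ?_
          have := natDegree_X_le (R := Fq)
          omega
        have p1 : (π ^ p).natDegree = 2 * p := by rw [hmonic.natDegree_pow, hdeg]; ring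
        omega
      have b2 : (F * π ^ m).natDegree ≤ 2 * p + 2 * m := by
        refine (natDegree_mul_le).trans ?_
        have p1 : (π ^ m).natDegree = 2 * m := by rw [hmonic.natDegree_pow, hdeg]; ring
        omega
      omega
    have hkem : k = m := by omega
    have hdG : G.natDegree = 0 := by omega
    -- write G and F/π^p as constants
    obtain ⟨cG, hcG⟩ := natDegree_eq_zero.mp hdG
    have hcGne : cG ≠ 0 := by rintro rfl; rw [← hcG] at hGne; simp at hGne
    have htmp : t = m + p := by omega
    have hNfact : N = π ^ m * (X * G * π ^ p - F) := by
      rw [hN_def, hG0eq, hkem]; ring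
    have hdvdM : π ^ p ∣ (X * G * π ^ p - F) := by
      have h4 : π ^ m * π ^ p ∣ π ^ m * (X * G * π ^ p - F) := by
        rw [← pow_add, ← hNfact, ← htmp]
        exact hdvdN
      exact (mul_dvd_mul_iff_left (pow_ne_zero m hπ)).mp h4
    have hdvdF : π ^ p ∣ F := by
      have h5 : π ^ p ∣ X * G * π ^ p := Dvd.intro_left (X * G) rfl
      have h6 := dvd_sub h5 hdvdM
      simpa using h6
    obtain ⟨F1, hF1⟩ := hdvdF
    have hdF1 : F1.natDegree = 0 := by
      rcases eq_or_ne F1 0 with rfl | hF1ne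
      · simp
      · have : F.natDegree = 2 * p + F1.natDegree := by
          rw [hF1, natDegree_mul (pow_ne_zero _ hπ) hF1ne, hmonic.natDegree_pow, hdeg]; ring
        omega
    obtain ⟨cF, hcF⟩ := natDegree_eq_zero.mp hdF1
    -- the reduced numerator has degree 1
    set N1 : Fq[X] := X * G - F1 with hN1_def
    have hdN1 : N1.natDegree = 1 := by
      rw [hN1_def, ← hcG, ← hcF]
      have h7 : X * C cG = C cG * X := by ring
      rw [h7]
      have h8 : (C cG * X).natDegree = 1 := natDegree_C_mul_X cG hcGne
      rw [natDegree_sub_eq_left_of_natDegree_lt] <;> simp [h8]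
    have hN1ne : N1 ≠ 0 := by
      intro h9; rw [h9] at hdN1; simp at hdN1
    have hndvdN1 : ¬ π ∣ N1 := by
      intro h10
      have := natDegree_le_of_dvd h10 hN1ne
      omega
    have hNfact2 : N = π ^ (m + p) * N1 := by
      rw [hN_def, hN1_def, hG0eq, hkem, hF1]; ring
    -- conclude
    have hvN : (piPrime Fq π hirr).intValuation N
        = ((Multiplicative.ofAdd (-((m : ℤ) + p)) : Multiplicative ℤ) : ℤₘ₀) := by
      rw [hNfact2, map_mul, vP_pi_pow Fq hirr, vP_not_dvd Fq hirr hndvdN1, mul_one]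
      push_cast
      ring_nf
    rw [hve, hvg, hvN, ← WithZero.coe_mul, ← ofAdd_add, hkem]
    rw [WithZero.coe_inj]
    congr 1; ring

lemma zabs_coe (q : ℕ) (y : Multiplicative ℤ) :
    zabs q (y : ℤₘ₀) = (q : ℝ) ^ (Multiplicative.toAdd y) := by
  rw [zabs, dif_neg WithZero.coe_ne_zero, WithZero.unzero_coe]

lemma zabs_one (q : ℕ) : zabs q (1 : ℤₘ₀) = 1 := by
  have h : ((1 : Multiplicative ℤ) : ℤₘ₀) = 1 := rfl
  rw [← h, zabs_coe]
  simp

lemma toKinf_mul (π : Polynomial Fq) (hirr : Irreducible π) (r s : RatFunc Fq) :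
    toKinf Fq π hirr (r * s) = toKinf Fq π hirr r * toKinf Fq π hirr s := by
  letI : Valued (RatFunc Fq) ℤₘ₀ := (piPrime Fq π hirr).adicValued
  exact IsDedekindDomain.HeightOneSpectrum.adicCompletion.coe_mul (K := RatFunc Fq) (v := piPrime Fq π hirr) r s

lemma toKinf_sub (π : Polynomial Fq) (hirr : Irreducible π) (r s : RatFunc Fq) :
    toKinf Fq π hirr (r - s) = toKinf Fq π hirr r - toKinf Fq π hirr s := by
  letI : Valued (RatFunc Fq) ℤₘ₀ := (piPrime Fq π hirr).adicValued
  apply IsDedekindDomain.HeightOneSpectrum.adicCompletion.ext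
  simp [toKinf, UniformSpace.Completion.coe_sub]
  rfl

lemma v_toKinf (π : Polynomial Fq) (hirr : Irreducible π) (r : RatFunc Fq) :
    Valued.v (toKinf Fq π hirr r) = (piPrime Fq π hirr).valuation (K := RatFunc Fq) r :=
  IsDedekindDomain.HeightOneSpectrum.valuedAdicCompletion_eq_valuation' (piPrime Fq π hirr) r

set_option maxHeartbeats 2000000 in
set_option synthInstance.maxHeartbeats 200000 in
/-- sharpness in Example 8.3: for the projective line with a degree-2 point at
infinity, some `α ∈ O_∞` is not `(-1)`-approximable. -/
theorem exists_not_neg_one_approximable_degree_two (q : ℕ) (hq : Fintype.card Fq = q)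
    (π : Polynomial Fq) (hmonic : π.Monic) (hirr : Irreducible π) (hdeg : π.natDegree = 2) :
    ∃ α : Kinf Fq π hirr, absKinf Fq q π hirr α ≤ 1 ∧
      ¬ ∃ f g : ℕ → ringA Fq π,
        (∀ n, IsApproxA Fq q π hirr (-1) α (f n) (g n)) ∧
        Tendsto
          (fun n => toKinf Fq π hirr ((f n : RatFunc Fq)) / toKinf Fq π hirr ((g n : RatFunc Fq)))
          atTop (nhds α) := by
  classical
  have hπ : π ≠ 0 := hirr.ne_zero
  have hq2 : 1 < q := by rw [← hq]; exact Fintype.one_lt_card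
  have hqR : (1 : ℝ) < (q : ℝ) := by exact_mod_cast hq2
  have hq0 : (q : ℝ) ≠ 0 := by positivity
  have hXndvd : ¬ π ∣ (X : Polynomial Fq) := by
    intro hdvd
    have h1 := natDegree_le_of_dvd hdvd X_ne_zero
    rw [hdeg, natDegree_X] at h1
    omega
  set Xr : RatFunc Fq := algebraMap Fq[X] (RatFunc Fq) X with hXr
  have hvXr : (piPrime Fq π hirr).valuation (K := RatFunc Fq) Xr = 1 := by
    rw [hXr, IsDedekindDomain.HeightOneSpectrum.valuation_of_algebraMap]
    exact vP_not_dvd Fq hirr hXndvd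
  refine ⟨toKinf Fq π hirr Xr, ?_, ?_⟩
  · simp only [absKinf]
    rw [v_toKinf, hvXr, zabs_one]
  · rintro ⟨f, g, happ, htend⟩
    set α := toKinf Fq π hirr Xr with hα
    have hkey : ∀ n, Valued.v (α - toKinf Fq π hirr ((f n : RatFunc Fq)) /
        toKinf Fq π hirr ((g n : RatFunc Fq))) = (1 : ℤₘ₀) := by
      intro n
      obtain ⟨hgne, hspan, hlt⟩ := happ n
      have hgK : ((g n : RatFunc Fq)) ≠ 0 := fun h0 => hgne (ZeroMemClass.coe_eq_zero.mp h0)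
      have hco : ∃ u w : ringA Fq π, u * f n + w * g n = 1 := by
        have h1 : (1 : ringA Fq π) ∈ Ideal.span {f n, g n} := by rw [hspan]; trivial
        exact Ideal.mem_span_pair.mp h1
      have hvgne : (piPrime Fq π hirr).valuation (K := RatFunc Fq) ((g n : RatFunc Fq)) ≠ 0 :=
        (Valuation.ne_zero_iff _).mpr hgK
      have hghne : toKinf Fq π hirr ((g n : RatFunc Fq)) ≠ 0 := by
        intro h0
        apply hvgne
        rw [← v_toKinf Fq π hirr, h0, map_zero]
      set e : RatFunc Fq := Xr * ((g n : RatFunc Fq)) - ((f n : RatFunc Fq)) with he_def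
      have hδg : (α - toKinf Fq π hirr ((f n : RatFunc Fq)) / toKinf Fq π hirr ((g n : RatFunc Fq)))
            * toKinf Fq π hirr ((g n : RatFunc Fq))
          = toKinf Fq π hirr e := by
        rw [he_def, toKinf_sub Fq π hirr, toKinf_mul Fq π hirr, hα]
        rw [sub_mul, div_mul_cancel₀ _ hghne]
      have hvδ : Valued.v (α - toKinf Fq π hirr ((f n : RatFunc Fq))
              / toKinf Fq π hirr ((g n : RatFunc Fq)))
            * (piPrime Fq π hirr).valuation (K := RatFunc Fq) ((g n : RatFunc Fq))
          = (piPrime Fq π hirr).valuation (K := RatFunc Fq) e := by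
        have h2 := congrArg Valued.v hδg
        rw [map_mul] at h2
        rw [v_toKinf Fq π hirr, v_toKinf Fq π hirr] at h2
        exact h2
      obtain ⟨yg, hyg⟩ := WithZero.ne_zero_iff_exists.mp hvgne
      -- establish the valuation-level approximation inequality
      have Hle : (piPrime Fq π hirr).valuation (K := RatFunc Fq) e
          * (piPrime Fq π hirr).valuation (K := RatFunc Fq) ((g n : RatFunc Fq)) ≤ 1 := by
        by_cases he0 : e = 0
        · rw [he0, map_zero, zero_mul]
          exact zero_le'
        · have hvene : (piPrime Fq π hirr).valuation (K := RatFunc Fq) e ≠ 0 :=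
            (Valuation.ne_zero_iff _).mpr he0
          obtain ⟨ye, hye⟩ := WithZero.ne_zero_iff_exists.mp hvene
          have hvδval : Valued.v (α - toKinf Fq π hirr ((f n : RatFunc Fq))
                / toKinf Fq π hirr ((g n : RatFunc Fq)))
              = ((ye / yg : Multiplicative ℤ) : ℤₘ₀) := by
            apply mul_right_cancel₀ hvgne
            rw [hvδ, ← hye, ← hyg, ← WithZero.coe_mul]
            exact congrArg _ (div_mul_cancel ye yg).symm
          simp only [absKinf] at hlt
          rw [hvδval, zabs_coe, v_toKinf Fq π hirr, ← hyg, zabs_coe] at hlt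
          rw [toAdd_div] at hlt
          have hR : (q:ℝ) ^ (-(-1:ℤ)) / ((q:ℝ) ^ (Multiplicative.toAdd yg)) ^ 2
              = (q:ℝ) ^ (1 - 2 * Multiplicative.toAdd yg) := by
            rw [neg_neg, ← zpow_natCast ((q:ℝ) ^ Multiplicative.toAdd yg) 2, ← zpow_mul,
              ← zpow_sub₀ hq0]
            congr 1
            ring
          rw [hR] at hlt
          have hint : Multiplicative.toAdd ye - Multiplicative.toAdd yg
              < 1 - 2 * Multiplicative.toAdd yg := (zpow_lt_zpow_iff_right₀ hqR).mp hlt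
          rw [← hye, ← hyg, ← WithZero.coe_mul]
          have h3 : ((1 : Multiplicative ℤ) : ℤₘ₀) = 1 := rfl
          rw [← h3, WithZero.coe_le_coe]
          have h4 : Multiplicative.toAdd (ye * yg) ≤ Multiplicative.toAdd (1 : Multiplicative ℤ) := by
            rw [toAdd_mul, toAdd_one]
            omega
          exact Multiplicative.toAdd_le.mp h4
      have hvv := key_lemma Fq hmonic hirr hdeg (f n) (g n) hgK hco (by rw [← hXr, ← he_def]; exact Hle)
      rw [← hXr, ← he_def] at hvv
      apply mul_right_cancel₀ hvgne
      rw [hvδ, hvv, one_mul]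
    -- contradiction with convergence
    have hU : {y : Kinf Fq π hirr | Valued.v (y - α) < (1 : ℤₘ₀)} ∈ nhds α := by
      rw [Valued.mem_nhds]
      exact ⟨1, fun y hy => by simpa using hy⟩
    have hev := htend.eventually_mem hU
    obtain ⟨n, hn⟩ := hev.exists
    have h6 : toKinf Fq π hirr ((f n : RatFunc Fq)) / toKinf Fq π hirr ((g n : RatFunc Fq)) - α
        = -(α - toKinf Fq π hirr ((f n : RatFunc Fq)) / toKinf Fq π hirr ((g n : RatFunc Fq))) := by
      ring
    have h5 : Valued.v (toKinf Fq π hirr ((f n : RatFunc Fq))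
        / toKinf Fq π hirr ((g n : RatFunc Fq)) - α) = (1 : ℤₘ₀) := by
      rw [h6, Valuation.map_neg, hkey n]
    rw [Set.mem_setOf_eq, h5] at hn
    exact lt_irrefl _ hn
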